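/- For every nonnegative integer b, the identity ∑_{j=1}^{b} (b − 1 + κ_{j−1} + κ_{b−j} − κ_b) = 0 holds. -/
import Mathlib


open Finset Filter Topology

/-- The `n`-th harmonic number `H_n = ∑_{i=1}^n 1/i`. -/
noncomputable def H (n : ℕ) : ℝ := ∑ i ∈ Finset.range n, (1 : ℝ) / (i + 1)

/-- `κ_n = 2(n+1)H_n - 4n`, the mean number of key comparisons for QuickSort on `n` keys. -/
noncomputable def κ (n : ℕ) : ℝ := 2 * (n + 1) * H n - 4 * n

lemma H_succ (n : ℕ) : H (n + 1) = H n + 1 / (n + 1) := by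
  simp [H, Finset.sum_range_succ]

lemma sum_kappa (b : ℕ) :
    2 * ∑ k ∈ Finset.range b, κ k = b * κ b - b * ((b : ℝ) - 1) := by
  induction b with
  | zero => simp [κ, H]
  | succ n ih =>
    rw [Finset.sum_range_succ, mul_add, ih]
    simp only [κ, H_succ]
    have h : (n : ℝ) + 1 ≠ 0 := by positivity
    push_cast
    field_simp
    ring

theorem basic_identity (b : ℕ) :
    ∑ j ∈ Finset.Icc 1 b, ((b : ℝ) - 1 + κ (j - 1) + κ (b - j) - κ b) = 0 := by
  have h1 : ∑ j ∈ Finset.Icc 1 b, κ (j - 1) = ∑ k ∈ Finset.range b, κ k := by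
    rw [← Finset.Ico_add_one_right_eq_Icc, Finset.sum_Ico_eq_sum_range]
    simp
  have h2 : ∑ j ∈ Finset.Icc 1 b, κ (b - j) = ∑ k ∈ Finset.range b, κ k := by
    rw [← Finset.Ico_add_one_right_eq_Icc, Finset.sum_Ico_eq_sum_range, ← Finset.sum_range_reflect]
    apply Finset.sum_congr (by simp)
    intro i hi
    simp only [Finset.mem_range] at hi
    congr 1
    omega
  have hsk := sum_kappa b
  simp only [Finset.sum_sub_distrib, Finset.sum_add_distrib, h1, h2,
    Finset.sum_const, Nat.card_Icc, Nat.add_sub_cancel, nsmul_eq_mul]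
  linarith
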